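/- Let (τ_k) be defined by τ_0 = 1, τ_k = Σ_{j=0}^{k−1}(k−j+1)τ_j for k ≥ 1. Then for any finitely supported nonzero multi-index m, Σ_{w ≤ m, w ≠ m} τ_{|w|} · |w|! · (|m|−|w|+1)! · C(m,w) = τ_{|m|} · |m|!. -/

import Mathlib

/-- Order (total degree) of a finitely supported multi-index. -/
def deg (m : ℕ →₀ ℕ) : ℕ := m.sum fun _ k => k

/-- Multivariate binomial coefficient `C(m, w) = Π_i C(m_i, w_i)`. -/
def mchoose (m w : ℕ →₀ ℕ) : ℕ := ∏ i ∈ m.support, (m i).choose (w i)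

lemma deg_add (u v : ℕ →₀ ℕ) : deg (u + v) = deg u + deg v := by
  unfold deg
  exact Finsupp.sum_add_index' (fun _ => rfl) (fun _ _ _ => rfl)

lemma deg_single (a k : ℕ) : deg (Finsupp.single a k) = k :=
  Finsupp.sum_single_index rfl

lemma range_succ_eq_Iic (n : ℕ) : Finset.range (n + 1) = Finset.Iic n := by
  ext x; simp [Nat.lt_succ_iff]

/-- Vandermonde with weights. -/
lemma vand (b d : ℕ) (F : ℕ → ℕ) :
    ∑ t ∈ Finset.range (b + d + 1), (b + d).choose t * F t
      = ∑ k ∈ Finset.range (b + 1), ∑ j ∈ Finset.range (d + 1),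
          b.choose k * (d.choose j * F (k + j)) := by
  have h1 : ∑ t ∈ Finset.range (b + d + 1), (b + d).choose t * F t
      = ∑ x ∈ (Finset.range (b + d + 1)).sigma (fun t => Finset.HasAntidiagonal.antidiagonal t),
          b.choose x.2.1 * (d.choose x.2.2 * F (x.2.1 + x.2.2)) := by
    rw [Finset.sum_sigma]
    refine Finset.sum_congr rfl fun t ht => ?_
    rw [Nat.add_choose_eq, Finset.sum_mul]
    refine Finset.sum_congr rfl fun p hp => ?_
    rw [Finset.HasAntidiagonal.mem_antidiagonal] at hp
    rw [hp, mul_assoc]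
  have h2 : ∑ x ∈ (Finset.range (b + d + 1)).sigma (fun t => Finset.HasAntidiagonal.antidiagonal t),
          b.choose x.2.1 * (d.choose x.2.2 * F (x.2.1 + x.2.2))
      = ∑ p ∈ (Finset.range (b + d + 1) ×ˢ Finset.range (b + d + 1)).filter
          (fun p => p.1 + p.2 ≤ b + d),
          b.choose p.1 * (d.choose p.2 * F (p.1 + p.2)) := by
    refine Finset.sum_bij' (fun x _ => x.2) (fun p _ => ⟨p.1 + p.2, p⟩) ?_ ?_ ?_ ?_ ?_
    · rintro ⟨t, p1, p2⟩ hx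
      rw [Finset.mem_sigma, Finset.mem_range, Finset.HasAntidiagonal.mem_antidiagonal] at hx
      dsimp only at hx ⊢
      simp only [Finset.mem_filter, Finset.mem_product, Finset.mem_range]
      omega
    · rintro ⟨p1, p2⟩ hp
      simp only [Finset.mem_filter, Finset.mem_product, Finset.mem_range] at hp
      simp only [Finset.mem_sigma, Finset.mem_range, Finset.HasAntidiagonal.mem_antidiagonal]
      exact ⟨by omega, trivial⟩
    · rintro ⟨t, p1, p2⟩ hx
      rw [Finset.mem_sigma, Finset.mem_range, Finset.HasAntidiagonal.mem_antidiagonal] at hx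
      dsimp only
      obtain ⟨-, h⟩ := hx
      dsimp only at h
      subst h
      rfl
    · rintro ⟨p1, p2⟩ _; rfl
    · rintro ⟨t, p⟩ _; rfl
  have h3 : ∑ p ∈ (Finset.range (b + d + 1) ×ˢ Finset.range (b + d + 1)).filter
          (fun p => p.1 + p.2 ≤ b + d),
          b.choose p.1 * (d.choose p.2 * F (p.1 + p.2))
      = ∑ p ∈ Finset.range (b + 1) ×ˢ Finset.range (d + 1),
          b.choose p.1 * (d.choose p.2 * F (p.1 + p.2)) := by
    rw [← Finset.sum_subset (s₁ := Finset.range (b + 1) ×ˢ Finset.range (d + 1))]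
    · intro p hp
      simp only [Finset.mem_product, Finset.mem_range] at hp
      simp only [Finset.mem_filter, Finset.mem_product, Finset.mem_range]
      omega
    · intro p hp hnp
      simp only [Finset.mem_filter, Finset.mem_product, Finset.mem_range] at hp
      simp only [Finset.mem_product, Finset.mem_range] at hnp
      rcases Nat.lt_or_ge b p.1 with h | h
      · rw [Nat.choose_eq_zero_of_lt h]; ring
      · have : d < p.2 := by omega
        rw [Nat.choose_eq_zero_of_lt this]; ring
  rw [h1, h2, h3, Finset.sum_product]

lemma key (m : ℕ →₀ ℕ) : ∀ (F : ℕ → ℕ),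
    ∑ w ∈ Finset.Iic m, mchoose m w * F (deg w)
      = ∑ j ∈ Finset.range (deg m + 1), (deg m).choose j * F j := by
  induction m using Finsupp.induction with
  | zero =>
    intro F
    have h : (Finset.Iic (0 : ℕ →₀ ℕ)) = {0} := by
      ext w; simp [Finset.mem_Iic, le_zero_iff]
    simp [h, deg, mchoose]
  | single_add a b f haf hb ih =>
    intro F
    have hfa : f a = 0 := Finsupp.notMem_support_iff.mp haf
    have hdeg : deg (Finsupp.single a b + f) = b + deg f := by
      rw [deg_add, deg_single]
    have hbij : ∑ w ∈ Finset.Iic (Finsupp.single a b + f),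
          mchoose (Finsupp.single a b + f) w * F (deg w)
        = ∑ p ∈ Finset.Iic b ×ˢ Finset.Iic f,
          mchoose (Finsupp.single a b + f) (Finsupp.single a p.1 + p.2) *
            F (deg (Finsupp.single a p.1 + p.2)) := by
      refine Finset.sum_bij' (fun w _ => (w a, w.erase a))
        (fun p _ => Finsupp.single a p.1 + p.2) ?_ ?_ ?_ ?_ ?_
      · intro w hw
        rw [Finset.mem_Iic] at hw
        rw [Finset.mem_product, Finset.mem_Iic, Finset.mem_Iic]
        constructor
        · have := hw a
          simpa [hfa] using this
        · intro i
          rcases eq_or_ne i a with rfl | hia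
          · simp [Finsupp.erase_apply]
          · have := hw i
            simpa [Finsupp.erase_apply, hia, Finsupp.single_apply, Ne.symm hia] using this
      · intro p hp
        rw [Finset.mem_product, Finset.mem_Iic, Finset.mem_Iic] at hp
        rw [Finset.mem_Iic]
        exact add_le_add (fun i => by
          rcases eq_or_ne i a with rfl | hia
          · simpa using hp.1
          · simp [Finsupp.single_apply, Ne.symm hia]) hp.2
      · intro w _
        exact Finsupp.single_add_erase a w
      · intro p hp
        rw [Finset.mem_product, Finset.mem_Iic, Finset.mem_Iic] at hp
        have hpa : p.2 a = 0 := Nat.le_zero.mp (hfa ▸ hp.2 a)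
        have h1 : (Finsupp.single a p.1 + p.2) a = p.1 := by
          simp [hpa]
        have h2 : (Finsupp.single a p.1 + p.2).erase a = p.2 := by
          ext i
          rcases eq_or_ne i a with rfl | hia
          · simp [Finsupp.erase_apply, hpa]
          · simp [Finsupp.erase_apply, hia, Finsupp.single_apply, Ne.symm hia]
        rw [h1, h2]
      · intro w hw
        rw [Finset.mem_Iic] at hw
        rw [Finsupp.single_add_erase a w]
    have hsupp : (Finsupp.single a b + f).support = insert a f.support := by
      rw [Finsupp.support_add_eq, Finsupp.support_single_ne_zero a hb]
      · rw [← Finset.insert_eq]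
      · rw [Finsupp.support_single_ne_zero a hb]
        simpa using haf
    have hmc : ∀ p ∈ Finset.Iic b ×ˢ Finset.Iic f,
        mchoose (Finsupp.single a b + f) (Finsupp.single a p.1 + p.2)
          = b.choose p.1 * mchoose f p.2 := by
      intro p hp
      rw [Finset.mem_product, Finset.mem_Iic, Finset.mem_Iic] at hp
      have hpa : p.2 a = 0 := Nat.le_zero.mp (hfa ▸ hp.2 a)
      unfold mchoose
      rw [hsupp, Finset.prod_insert haf]
      congr 1
      · simp [hfa, hpa]
      · refine Finset.prod_congr rfl fun i hi => ?_
        have hia : i ≠ a := fun h => haf (h ▸ hi)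
        simp [Finsupp.single_apply, Ne.symm hia]
    rw [hbij, Finset.sum_congr rfl (fun p hp => by
      rw [hmc p hp, deg_add, deg_single, mul_assoc])]
    rw [Finset.sum_product]
    have hin : ∀ k, ∑ w' ∈ Finset.Iic f, b.choose k *
          (mchoose f w' * F (k + deg w'))
        = b.choose k * ∑ j ∈ Finset.range (deg f + 1),
            (deg f).choose j * F (k + j) := by
      intro k
      rw [← Finset.mul_sum, ih (fun j => F (k + j))]
    rw [Finset.sum_congr rfl fun k _ => hin k]
    rw [hdeg, vand b (deg f) F, ← range_succ_eq_Iic]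
    refine Finset.sum_congr rfl fun k _ => ?_
    rw [Finset.mul_sum]

lemma deg_eq_zero_iff (m : ℕ →₀ ℕ) : deg m = 0 ↔ m = 0 := by
  constructor
  · intro h
    ext i
    rcases eq_or_ne (m i) 0 with h0 | h0
    · simp [h0]
    · exfalso
      have hi : i ∈ m.support := Finsupp.mem_support_iff.mpr h0
      have hd : deg m = ∑ j ∈ m.support, m j := rfl
      have : m i ≤ deg m := by
        rw [hd]
        exact Finset.single_le_sum (f := fun j => m j) (fun _ _ => Nat.zero_le _) hi
      omega
  · rintro rfl; simp [deg]

theorem stmt_13 (τ : ℕ → ℕ) (h0 : τ 0 = 1)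
    (hrec : ∀ k : ℕ, 1 ≤ k → τ k = ∑ j ∈ Finset.range k, (k - j + 1) * τ j)
    (m : ℕ →₀ ℕ) (hm : m ≠ 0) :
    ∑ w ∈ (Finset.Iic m).erase m,
        τ (deg w) * Nat.factorial (deg w) *
          Nat.factorial (deg m - deg w + 1) * mchoose m w
      = τ (deg m) * Nat.factorial (deg m) := by
  set n := deg m with hn
  have hn1 : 1 ≤ n := Nat.one_le_iff_ne_zero.mpr
    (by rw [hn]; exact fun h => hm ((deg_eq_zero_iff m).mp h))
  set F : ℕ → ℕ := fun j => τ j * Nat.factorial j * Nat.factorial (n - j + 1) with hF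
  have hkey : ∑ w ∈ Finset.Iic m, mchoose m w * F (deg w)
      = ∑ j ∈ Finset.range (n + 1), n.choose j * F j := key m F
  have hmm : mchoose m m = 1 := by
    unfold mchoose
    exact Finset.prod_eq_one fun i _ => Nat.choose_self _
  have hGm : mchoose m m * F n = τ n * Nat.factorial n := by
    rw [hmm, one_mul, hF]
    simp [Nat.sub_self]
  have hsplit := Finset.add_sum_erase (Finset.Iic m)
    (fun w => mchoose m w * F (deg w)) (Finset.mem_Iic.mpr (le_refl m))
  have hrhs : ∑ j ∈ Finset.range (n + 1), n.choose j * F j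
      = 2 * (τ n * Nat.factorial n) := by
    have hterm : ∀ j ∈ Finset.range (n + 1), n.choose j * F j
        = (n - j + 1) * τ j * Nat.factorial n := by
      intro j hj
      rw [Finset.mem_range, Nat.lt_succ_iff] at hj
      rw [hF]
      have h1 : Nat.factorial (n - j + 1) = (n - j + 1) * Nat.factorial (n - j) :=
        Nat.factorial_succ _
      calc n.choose j * (τ j * Nat.factorial j * Nat.factorial (n - j + 1))
          = (n - j + 1) * τ j * (n.choose j * Nat.factorial j * Nat.factorial (n - j)) := by
            rw [h1]; ring
        _ = (n - j + 1) * τ j * Nat.factorial n := by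
            rw [Nat.choose_mul_factorial_mul_factorial hj]
    rw [Finset.sum_congr rfl hterm]
    rw [Finset.sum_range_succ, ← Finset.sum_mul]
    have : ∑ j ∈ Finset.range n, (n - j + 1) * τ j = τ n := (hrec n hn1).symm
    rw [this, Nat.sub_self]
    ring
  have hcongr : ∑ w ∈ (Finset.Iic m).erase m,
        τ (deg w) * Nat.factorial (deg w) *
          Nat.factorial (deg m - deg w + 1) * mchoose m w
      = ∑ w ∈ (Finset.Iic m).erase m, mchoose m w * F (deg w) := by
    refine Finset.sum_congr rfl fun w _ => ?_
    rw [hF, ← hn]; ring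
  rw [hcongr]
  have := hsplit
  rw [hkey, hrhs, ← hn, hGm] at this
  omega
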